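/- For a sequence of real numbers (a_j) and s ≥ 0, the condition lim_{δ↓0} limsup_{N→∞} (#{j < N : |a_j| > δ j^{-s}})/N = 0 holds if and only if there exists a strictly increasing subsequence of indices (j_k) such that a_{j_k} = o(j_k^{-s}) as k → ∞ and j_k / k → 1 as k → ∞. -/

import Mathlib

open Filter Finset
open scoped Classical


noncomputable def pcnt (P : ℕ → Prop) (N : ℕ) : ℕ := ((Finset.Icc 1 N).filter P).card

lemma pcnt_le (P : ℕ → Prop) (N : ℕ) : pcnt P N ≤ N := by
  have := Finset.card_filter_le (Finset.Icc 1 N) P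
  simpa [pcnt, Nat.card_Icc] using this

lemma pcnt_mono {P Q : ℕ → Prop} (h : ∀ m, 1 ≤ m → P m → Q m) (N : ℕ) :
    pcnt P N ≤ pcnt Q N := by
  apply Finset.card_le_card
  intro m hm
  simp only [Finset.mem_filter, Finset.mem_Icc] at hm ⊢
  exact ⟨hm.1, h m hm.1.1 hm.2⟩

lemma pred_iff (a : ℕ → ℝ) (s : ℝ) (δ : ℝ) {m : ℕ} (hm : 1 ≤ m) :
    (δ * (m : ℝ) ^ (-s) < |a m|) ↔ δ < |a m| * (m : ℝ) ^ s := by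
  have hm' : (0:ℝ) < m := by exact_mod_cast hm
  rw [Real.rpow_neg hm'.le, ← div_eq_mul_inv, div_lt_iff₀ (Real.rpow_pos_of_pos hm' s)]

section PartI
variable (a : ℕ → ℝ) (s : ℝ)

-- density function
noncomputable def Dfun (δ : ℝ) (N : ℕ) : ℝ :=
  (pcnt (fun j : ℕ => δ * (j : ℝ) ^ (-s) < |a j|) N : ℝ) / N

lemma Dfun_nonneg (δ : ℝ) (N : ℕ) : 0 ≤ Dfun a s δ N := by
  apply div_nonneg <;> positivity

lemma Dfun_le_one (δ : ℝ) (N : ℕ) : Dfun a s δ N ≤ 1 := by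
  rcases Nat.eq_zero_or_pos N with h | h
  · simp [Dfun, h]
  · rw [Dfun, div_le_one (by exact_mod_cast h)]
    exact_mod_cast pcnt_le _ N

lemma star_iff_lhs :
    Filter.Tendsto
        (fun δ : ℝ =>
          Filter.limsup
            (fun N : ℕ =>
              (((Finset.Icc 1 N).filter
                  (fun j : ℕ => δ * (j : ℝ) ^ (-s) < |a j|)).card : ℝ) / N)
            Filter.atTop)
        (nhdsWithin 0 (Set.Ioi 0)) (nhds 0)
      ↔ ∀ δ > (0:ℝ), Tendsto (fun N => Dfun a s δ N) atTop (nhds 0) := by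
  have hbdd : ∀ δ : ℝ, IsBoundedUnder (· ≤ ·) atTop (Dfun a s δ) :=
    fun δ => isBoundedUnder_of ⟨1, fun N => Dfun_le_one a s δ N⟩
  have hbdd' : ∀ δ : ℝ, IsBoundedUnder (· ≥ ·) atTop (Dfun a s δ) :=
    fun δ => isBoundedUnder_of ⟨0, fun N => Dfun_nonneg a s δ N⟩
  have hL0 : ∀ δ : ℝ, 0 ≤ limsup (Dfun a s δ) atTop := fun δ =>
    le_limsup_of_frequently_le
      (Filter.Frequently.of_forall (Dfun_nonneg a s δ)) (hbdd δ)
  have heq : (fun δ : ℝ =>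
          Filter.limsup
            (fun N : ℕ =>
              (((Finset.Icc 1 N).filter
                  (fun j : ℕ => δ * (j : ℝ) ^ (-s) < |a j|)).card : ℝ) / N)
            Filter.atTop) = fun δ => limsup (Dfun a s δ) atTop := rfl
  rw [heq]
  constructor
  · intro H δ0 hδ0
    -- step 1 : limsup (Dfun δ0) = 0
    have hmono : ∀ δ : ℝ, 0 < δ → δ ≤ δ0 →
        limsup (Dfun a s δ0) atTop ≤ limsup (Dfun a s δ) atTop := by
      intro δ hδ hδδ0
      apply limsup_le_limsup
      · apply Filter.Eventually.of_forall
        intro N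
        have hc : pcnt (fun j : ℕ => δ0 * (j : ℝ) ^ (-s) < |a j|) N ≤
            pcnt (fun j : ℕ => δ * (j : ℝ) ^ (-s) < |a j|) N := by
          apply pcnt_mono
          intro m _ hP
          refine lt_of_le_of_lt ?_ hP
          exact mul_le_mul_of_nonneg_right hδδ0 (Real.rpow_nonneg (Nat.cast_nonneg m) _)
        unfold Dfun
        have hc' : ((pcnt (fun j : ℕ => δ0 * (j : ℝ) ^ (-s) < |a j|) N : ℕ) : ℝ) ≤
            ((pcnt (fun j : ℕ => δ * (j : ℝ) ^ (-s) < |a j|) N : ℕ) : ℝ) := by exact_mod_cast hc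
        gcongr
      · exact (hbdd' δ0).isCoboundedUnder_le
      · exact hbdd δ
    have hls : limsup (Dfun a s δ0) atTop = 0 := by
      by_contra h
      have hpos : 0 < limsup (Dfun a s δ0) atTop := (hL0 δ0).lt_of_ne (Ne.symm h)
      have h1 : ∀ᶠ δ in nhdsWithin (0:ℝ) (Set.Ioi 0),
          limsup (Dfun a s δ) atTop < limsup (Dfun a s δ0) atTop :=
        H.eventually (gt_mem_nhds hpos)
      have h2 : ∀ᶠ δ in nhdsWithin (0:ℝ) (Set.Ioi 0), δ < δ0 :=
        eventually_nhdsWithin_of_eventually_nhds (gt_mem_nhds hδ0)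
      have h3 : ∀ᶠ δ in nhdsWithin (0:ℝ) (Set.Ioi 0), δ ∈ Set.Ioi (0:ℝ) :=
        eventually_mem_nhdsWithin
      obtain ⟨δ, hδ1, hδ2, hδ3⟩ := (h1.and (h2.and h3)).exists
      exact absurd (hmono δ hδ3 hδ2.le) (not_le.mpr hδ1)
    -- step 2 : tendsto
    apply tendsto_of_liminf_eq_limsup ?_ hls (hbdd δ0) (hbdd' δ0)
    apply le_antisymm
    · exact hls ▸ liminf_le_limsup (hbdd δ0) (hbdd' δ0)
    · exact le_liminf_of_le (hbdd δ0).isCoboundedUnder_ge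
        (Filter.Eventually.of_forall (Dfun_nonneg a s δ0))
  · intro H
    apply Tendsto.congr' (f₁ := fun _ => (0:ℝ))
    · exact (Filter.eventuallyEq_of_mem self_mem_nhdsWithin
        (fun δ hδ => ((H δ hδ).limsup_eq).symm))
    · exact tendsto_const_nhds
end PartI


lemma hjk {j : ℕ → ℕ} (hsm : StrictMono j) (h1 : ∀ k, 1 ≤ j k) (k : ℕ) : k + 1 ≤ j k := by
  induction k with
  | zero => exact h1 0
  | succ n ih => exact Nat.succ_le_of_lt (lt_of_le_of_lt ih (hsm (Nat.lt_succ_self n)))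

noncomputable def Kc (j : ℕ → ℕ) (N : ℕ) : ℕ :=
  ((Finset.range (N+1)).filter (fun k => j k ≤ N)).card

lemma Kc_iff {j : ℕ → ℕ} (hsm : StrictMono j) (h1 : ∀ k, 1 ≤ j k) (N k : ℕ) :
    j k ≤ N ↔ k < Kc j N := by
  constructor
  · intro h
    have hsub : Finset.range (k+1) ⊆ (Finset.range (N+1)).filter (fun k => j k ≤ N) := by
      intro k' hk'
      simp only [Finset.mem_range] at hk'
      have hk'k : k' ≤ k := Nat.lt_succ_iff.mp hk'
      have hj' : j k' ≤ j k := hsm.monotone hk'k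
      have hjj : k' + 1 ≤ j k' := hjk hsm h1 k'
      simp only [Finset.mem_filter, Finset.mem_range]
      exact ⟨by omega, hj'.trans h⟩
    have hcard := Finset.card_le_card hsub
    simp only [Finset.card_range] at hcard
    exact lt_of_lt_of_le (Nat.lt_succ_self k) hcard
  · intro h
    by_contra h'
    push_neg at h'
    have hsub : (Finset.range (N+1)).filter (fun k => j k ≤ N) ⊆ Finset.range k := by
      intro k' hk'
      simp only [Finset.mem_filter, Finset.mem_range] at hk' ⊢
      by_contra hkk
      push_neg at hkk
      exact absurd (hsm.monotone hkk |>.trans hk'.2) (not_le.mpr h')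
    have hcard := Finset.card_le_card hsub
    simp only [Finset.card_range] at hcard
    exact absurd h (not_lt.mpr hcard)

lemma Kc_top {j : ℕ → ℕ} (hsm : StrictMono j) (h1 : ∀ k, 1 ≤ j k) :
    Tendsto (Kc j) atTop atTop := by
  rw [tendsto_atTop]
  intro b
  filter_upwards [eventually_ge_atTop (j b)] with N hN
  exact ((Kc_iff hsm h1 N b).mp hN).le

lemma pcnt_range {j : ℕ → ℕ} (hsm : StrictMono j) (h1 : ∀ k, 1 ≤ j k) (N : ℕ) :
    pcnt (· ∈ Set.range j) N = Kc j N := by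
  unfold pcnt Kc
  have hset : (Finset.Icc 1 N).filter (fun m => m ∈ Set.range j)
      = ((Finset.range (N+1)).filter (fun k => j k ≤ N)).image j := by
    ext m
    constructor
    · intro hm
      simp only [Finset.mem_filter, Finset.mem_Icc, Set.mem_range] at hm
      obtain ⟨⟨hm1, hmN⟩, k, hk⟩ := hm
      rw [Finset.mem_image]
      refine ⟨k, ?_, hk⟩
      simp only [Finset.mem_filter, Finset.mem_range]
      have hjj := hjk hsm h1 k
      rw [hk] at hjj
      omega
    · intro hm
      rw [Finset.mem_image] at hm
      obtain ⟨k, hk, hjkm⟩ := hm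
      simp only [Finset.mem_filter, Finset.mem_range] at hk
      simp only [Finset.mem_filter, Finset.mem_Icc, Set.mem_range]
      refine ⟨⟨?_, ?_⟩, k, hjkm⟩
      · rw [← hjkm]; exact h1 k
      · rw [← hjkm]; exact hk.2
  rw [hset, Finset.card_image_of_injective _ hsm.injective]

lemma ratio_phi {j : ℕ → ℕ} (h1 : ∀ k, 1 ≤ j k)
    (hr : Tendsto (fun k : ℕ => (j k : ℝ) / k) atTop (nhds 1)) :
    Tendsto (fun t : ℕ => (t : ℝ) / (j t)) atTop (nhds 1) := by
  have := hr.inv₀ one_ne_zero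
  simp only [inv_one] at this
  apply this.congr'
  filter_upwards [eventually_ge_atTop 1] with t ht
  rw [inv_div]

lemma ratio_psi {j : ℕ → ℕ} (h1 : ∀ k, 1 ≤ j k)
    (hr : Tendsto (fun k : ℕ => (j k : ℝ) / k) atTop (nhds 1)) :
    Tendsto (fun t : ℕ => ((t : ℝ) + 1) / (j t)) atTop (nhds 1) := by
  have h2 : Tendsto (fun t : ℕ => ((t : ℝ) + 1) / t) atTop (nhds 1) := by
    have hinv : Tendsto (fun t : ℕ => (t : ℝ)⁻¹) atTop (nhds 0) :=
      tendsto_inv_atTop_zero.comp tendsto_natCast_atTop_atTop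
    have := (tendsto_const_nhds (x := (1:ℝ)) (f := atTop)).add hinv
    rw [add_zero] at this
    apply this.congr'
    filter_upwards [eventually_ge_atTop 1] with t ht
    have ht' : (t : ℝ) ≠ 0 := by positivity
    field_simp
  have hmul := (ratio_phi h1 hr).mul h2
  rw [one_mul] at hmul
  apply hmul.congr'
  filter_upwards [eventually_ge_atTop 1] with t ht
  have ht' : (t : ℝ) ≠ 0 := by positivity
  have hj' : (j t : ℝ) ≠ 0 := by have := h1 t; positivity
  field_simp

lemma Kc_ratio {j : ℕ → ℕ} (hsm : StrictMono j) (h1 : ∀ k, 1 ≤ j k)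
    (hr : Tendsto (fun k : ℕ => (j k : ℝ) / k) atTop (nhds 1)) :
    Tendsto (fun N : ℕ => (Kc j N : ℝ) / N) atTop (nhds 1) := by
  have hlow : Tendsto ((fun t : ℕ => (t : ℝ) / (j t)) ∘ (Kc j)) atTop (nhds 1) :=
    (ratio_phi h1 hr).comp (Kc_top hsm h1)
  have hup : Tendsto ((fun t : ℕ => ((t : ℝ) + 1) / (j t)) ∘ (fun N => Kc j N - 1))
      atTop (nhds 1) :=
    (ratio_psi h1 hr).comp ((tendsto_sub_atTop_nat 1).comp (Kc_top hsm h1))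
  apply tendsto_of_tendsto_of_tendsto_of_le_of_le' hlow hup
  · filter_upwards [eventually_ge_atTop (max (j 1) 1)] with N hN
    have hN1 : 1 ≤ N := le_trans (le_max_right _ _) hN
    have hK2 : 1 < Kc j N := (Kc_iff hsm h1 N 1).mp (le_trans (le_max_left _ _) hN)
    have hNlt : N < j (Kc j N) := by
      by_contra h
      push_neg at h
      exact absurd ((Kc_iff hsm h1 N _).mp h) (lt_irrefl _)
    simp only [Function.comp_apply]
    have hNpos : (0:ℝ) < N := by exact_mod_cast hN1
    gcongr
  · filter_upwards [eventually_ge_atTop (max (j 1) 1)] with N hN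
    have hN1 : 1 ≤ N := le_trans (le_max_right _ _) hN
    have hK2 : 1 < Kc j N := (Kc_iff hsm h1 N 1).mp (le_trans (le_max_left _ _) hN)
    have hle : j (Kc j N - 1) ≤ N :=
      (Kc_iff hsm h1 N (Kc j N - 1)).mpr (by omega)
    simp only [Function.comp_apply]
    have hcast : ((Kc j N - 1 : ℕ) : ℝ) + 1 = (Kc j N : ℝ) := by
      have : (Kc j N - 1) + 1 = Kc j N := by omega
      exact_mod_cast congrArg (Nat.cast (R := ℝ)) this
    rw [hcast]
    have hjpos : (0:ℝ) < (j (Kc j N - 1) : ℝ) := by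
      have := h1 (Kc j N - 1); exact_mod_cast this
    gcongr

lemma star_of_sub (a : ℕ → ℝ) (s : ℝ) {j : ℕ → ℕ} (hsm : StrictMono j) (h1 : ∀ k, 1 ≤ j k)
    (hto : Tendsto (fun k : ℕ => |a (j k)| * (j k : ℝ) ^ s) atTop (nhds 0))
    (hr : Tendsto (fun k : ℕ => (j k : ℝ) / k) atTop (nhds 1)) :
    ∀ δ > (0:ℝ), Tendsto (fun N => Dfun a s δ N) atTop (nhds 0) := by
  intro δ hδ
  obtain ⟨K, hK⟩ := eventually_atTop.mp (hto.eventually (gt_mem_nhds hδ))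
  -- counting bound
  have hcard : ∀ N : ℕ, pcnt (fun m : ℕ => δ * (m : ℝ) ^ (-s) < |a m|) N
      ≤ K + (N - Kc j N) := by
    intro N
    have hsub : (Finset.Icc 1 N).filter (fun m : ℕ => δ * (m : ℝ) ^ (-s) < |a m|)
        ⊆ ((Finset.range K).image j) ∪ ((Finset.Icc 1 N).filter (fun m => m ∉ Set.range j)) := by
      intro m hm
      simp only [Finset.mem_filter, Finset.mem_Icc] at hm
      obtain ⟨⟨hm1, hmN⟩, hQ⟩ := hm
      have hb : δ < |a m| * (m : ℝ) ^ s := (pred_iff a s δ hm1).mp hQ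
      rw [Finset.mem_union]
      by_cases hmem : m ∈ Set.range j
      · left
        obtain ⟨k, hk⟩ := hmem
        rw [Finset.mem_image]
        refine ⟨k, ?_, hk⟩
        rw [Finset.mem_range]
        by_contra hkK
        push_neg at hkK
        have := hK k hkK
        rw [hk] at this
        exact absurd hb (not_lt.mpr this.le)
      · right
        simp only [Finset.mem_filter, Finset.mem_Icc]
        exact ⟨⟨hm1, hmN⟩, hmem⟩
    have h2 := Finset.card_le_card hsub
    have h3 := Finset.card_union_le ((Finset.range K).image j)
      ((Finset.Icc 1 N).filter (fun m => m ∉ Set.range j))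
    have h4 : ((Finset.range K).image j).card ≤ K := by
      apply le_trans (Finset.card_image_le)
      simp
    have h5 : ((Finset.Icc 1 N).filter (fun m => m ∉ Set.range j)).card = N - Kc j N := by
      have h6 := Finset.card_filter_add_card_filter_not
        (s := Finset.Icc 1 N) (fun m => m ∈ Set.range j)
      rw [Nat.card_Icc] at h6
      have h7 : ((Finset.Icc 1 N).filter (fun m => m ∈ Set.range j)).card = Kc j N :=
        pcnt_range hsm h1 N
      omega
    calc pcnt (fun m : ℕ => δ * (m : ℝ) ^ (-s) < |a m|) N ≤ _ := h2
      _ ≤ _ := h3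
      _ ≤ K + (N - Kc j N) := by omega
  -- real squeeze
  have hKcN : ∀ N, Kc j N ≤ N := by
    intro N
    rw [← pcnt_range hsm h1 N]
    exact pcnt_le _ N
  have hub : ∀ᶠ N : ℕ in atTop, Dfun a s δ N ≤ (K : ℝ) / N + (1 - (Kc j N : ℝ) / N) := by
    filter_upwards [eventually_ge_atTop 1] with N hN
    have hNpos : (0:ℝ) < N := by exact_mod_cast hN
    have hc : (pcnt (fun m : ℕ => δ * (m : ℝ) ^ (-s) < |a m|) N : ℝ)
        ≤ (K : ℝ) + ((N : ℝ) - (Kc j N : ℝ)) := by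
      have := hcard N
      have hcast : ((K + (N - Kc j N) : ℕ) : ℝ) = (K : ℝ) + ((N : ℝ) - (Kc j N : ℝ)) := by
        have := hKcN N
        push_cast [Nat.cast_sub (hKcN N)]
        ring
      calc (pcnt (fun m : ℕ => δ * (m : ℝ) ^ (-s) < |a m|) N : ℝ)
          ≤ ((K + (N - Kc j N) : ℕ) : ℝ) := by exact_mod_cast hcard N
        _ = _ := hcast
    rw [Dfun, div_le_iff₀ hNpos]
    calc (pcnt (fun m : ℕ => δ * (m : ℝ) ^ (-s) < |a m|) N : ℝ)
        ≤ (K : ℝ) + ((N : ℝ) - (Kc j N : ℝ)) := hc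
      _ = ((K : ℝ) / N + (1 - (Kc j N : ℝ) / N)) * N := by field_simp
  have hrhs : Tendsto (fun N : ℕ => (K : ℝ) / N + (1 - (Kc j N : ℝ) / N)) atTop (nhds 0) := by
    have ht1 : Tendsto (fun N : ℕ => (K : ℝ) / N) atTop (nhds 0) :=
      tendsto_const_div_atTop_nhds_zero_nat (K : ℝ)
    have ht2 : Tendsto (fun N : ℕ => 1 - (Kc j N : ℝ) / N) atTop (nhds 0) := by
      have := (tendsto_const_nhds (x := (1:ℝ)) (f := atTop (α := ℕ))).sub
        (Kc_ratio hsm h1 hr)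
      rw [sub_self] at this
      exact this
    have := ht1.add ht2
    rw [add_zero] at this
    exact this
  exact tendsto_of_tendsto_of_tendsto_of_le_of_le' tendsto_const_nhds hrhs
    (Filter.Eventually.of_forall (Dfun_nonneg a s δ)) hub

noncomputable def Nseq (f : ℕ → ℕ) : ℕ → ℕ
  | 0 => f 0
  | i+1 => max (f (i+1)) (Nseq f i + 1)

lemma Nseq_strictMono (f : ℕ → ℕ) : StrictMono (Nseq f) :=
  strictMono_nat_of_lt_succ fun n => lt_of_lt_of_le (Nat.lt_succ_self _) (le_max_right _ _)

lemma f_le_Nseq (f : ℕ → ℕ) (i : ℕ) : f i ≤ Nseq f i := by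
  cases i with
  | zero => exact le_refl _
  | succ n => exact le_max_left _ _

lemma pcnt_split (P : ℕ → Prop) (M : ℕ) : pcnt P M + pcnt (fun m => ¬ P m) M = M := by
  unfold pcnt
  have h := Finset.card_filter_add_card_filter_not (s := Finset.Icc 1 M) P
  rw [Nat.card_Icc, Nat.add_sub_cancel] at h
  convert h using 3
  congr!

lemma pcnt_mono' {P Q : ℕ → Prop} (M : ℕ) (h : ∀ m, 1 ≤ m → m ≤ M → P m → Q m) :
    pcnt P M ≤ pcnt Q M := by
  unfold pcnt
  apply Finset.card_le_card
  intro m hm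
  simp only [Finset.mem_filter, Finset.mem_Icc] at hm ⊢
  exact ⟨hm.1, h m hm.1.1 hm.1.2 hm.2⟩

lemma sub_of_star (a : ℕ → ℝ) (s : ℝ)
    (hstar : ∀ δ > (0:ℝ), Tendsto (fun N => Dfun a s δ N) atTop (nhds 0)) :
    ∃ j : ℕ → ℕ, StrictMono j ∧ (∀ k, 1 ≤ j k) ∧
      Filter.Tendsto (fun k : ℕ => |a (j k)| * (j k : ℝ) ^ s) Filter.atTop (nhds 0) ∧
      Filter.Tendsto (fun k : ℕ => (j k : ℝ) / (k : ℝ)) Filter.atTop (nhds 1) := by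
  set b : ℕ → ℝ := fun m => |a m| * (m : ℝ) ^ s with hbdef
  set Bp : ℕ → ℕ → Prop := fun i m => 1 / ((i : ℝ) + 1) < b m with hBpdef
  -- translate star to Bp counts
  have hpce : ∀ (i : ℕ) (N : ℕ), pcnt (Bp i) N
      = pcnt (fun m : ℕ => (1 / ((i:ℝ)+1)) * (m : ℝ) ^ (-s) < |a m|) N := by
    intro i N
    unfold pcnt
    congr 1
    apply Finset.filter_congr
    intro m hm
    rw [Finset.mem_Icc] at hm
    exact (pred_iff a s _ hm.1).symm
  have hstar' : ∀ i : ℕ, Tendsto (fun N => (pcnt (Bp i) N : ℝ) / N) atTop (nhds 0) := by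
    intro i
    have hpos : (0:ℝ) < 1 / ((i:ℝ)+1) := by positivity
    have := hstar _ hpos
    apply this.congr
    intro N
    rw [Dfun, hpce]
  -- choose thresholds
  have hn : ∀ i : ℕ, ∃ n : ℕ, ∀ M : ℕ, n ≤ M → (pcnt (Bp i) M : ℝ) ≤ M / ((i:ℝ)+1) := by
    intro i
    have hpos : (0:ℝ) < 1 / ((i:ℝ)+1) := by positivity
    obtain ⟨n0, hn0⟩ := eventually_atTop.mp ((hstar' i).eventually (gt_mem_nhds hpos))
    refine ⟨max n0 1, fun M hM => ?_⟩
    have hM1 : 1 ≤ M := le_trans (le_max_right _ _) hM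
    have hMpos : (0:ℝ) < M := by exact_mod_cast hM1
    have := hn0 M (le_trans (le_max_left _ _) hM)
    rw [div_lt_iff₀ hMpos] at this
    calc (pcnt (Bp i) M : ℝ) ≤ 1 / ((i:ℝ)+1) * M := this.le
      _ = M / ((i:ℝ)+1) := by ring
  choose f hf using hn
  set L : ℕ → ℕ := fun M => Nat.findGreatest (fun i => Nseq f i ≤ M) M with hLdef
  have hL_le : ∀ M, L M ≤ M := fun M => Nat.findGreatest_le M
  have hL_spec : ∀ M, Nseq f 0 ≤ M → Nseq f (L M) ≤ M := by
    intro M hM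
    exact Nat.findGreatest_spec (P := fun i => Nseq f i ≤ M) (Nat.zero_le M) hM
  have hL_mono : ∀ {m M : ℕ}, m ≤ M → L m ≤ L M := by
    intro m M hmM
    by_cases h : Nseq f 0 ≤ m
    · exact Nat.le_findGreatest (le_trans (hL_le m) hmM) (le_trans (hL_spec m h) hmM)
    · have hLm : L m = 0 := by
        rw [hLdef]
        simp only
        rw [Nat.findGreatest_eq_zero_iff]
        intro k _ _
        push_neg at h
        intro hk
        have : Nseq f 0 ≤ Nseq f k := (Nseq_strictMono f).monotone (Nat.zero_le k)
        omega
      rw [hLm]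
      exact Nat.zero_le _
  have hL_top : Tendsto L atTop atTop := by
    rw [tendsto_atTop]
    intro i
    filter_upwards [eventually_ge_atTop (max (Nseq f i) i)] with M hM
    exact Nat.le_findGreatest (le_trans (le_max_right _ _) hM)
      (le_trans (le_max_left _ _) hM)
  set G : ℕ → Prop := fun m => 1 ≤ m ∧ b m ≤ 1 / ((L m : ℝ) + 1) with hGdef
  -- bad count bound
  have hGbad : ∀ M : ℕ, Nseq f 0 ≤ M → (pcnt (fun m => ¬ G m) M : ℝ) ≤ M / ((L M : ℝ) + 1) := by
    intro M hM
    have hcard : pcnt (fun m => ¬ G m) M ≤ pcnt (Bp (L M)) M := by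
      apply pcnt_mono'
      intro m hm1 hmM hnG
      simp only [hGdef, not_and, not_le] at hnG
      have hbm := hnG hm1
      have hLmono := hL_mono hmM
      have h1 : 1 / ((L M : ℝ) + 1) ≤ 1 / ((L m : ℝ) + 1) := by
        apply one_div_le_one_div_of_le
        · positivity
        · have : (L m : ℝ) ≤ L M := by exact_mod_cast hLmono
          linarith
      exact lt_of_le_of_lt h1 hbm
    have hM' : f (L M) ≤ M := le_trans (f_le_Nseq f (L M)) (hL_spec M hM)
    calc (pcnt (fun m => ¬ G m) M : ℝ) ≤ (pcnt (Bp (L M)) M : ℝ) := by exact_mod_cast hcard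
      _ ≤ M / ((L M : ℝ) + 1) := hf (L M) M hM'
  -- density of G tends to 1
  have hsplit : ∀ M : ℕ, pcnt G M + pcnt (fun m => ¬ G m) M = M := fun M => pcnt_split G M
  have hinvL : Tendsto (fun M : ℕ => 1 / ((L M : ℝ) + 1)) atTop (nhds 0) :=
    tendsto_one_div_add_atTop_nhds_zero_nat.comp hL_top
  have hGdens : Tendsto (fun M : ℕ => (pcnt G M : ℝ) / M) atTop (nhds 1) := by
    have hlow : Tendsto (fun M : ℕ => 1 - 1 / ((L M : ℝ) + 1)) atTop (nhds 1) := by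
      have := (tendsto_const_nhds (x := (1:ℝ)) (f := atTop (α := ℕ))).sub hinvL
      rwa [sub_zero] at this
    apply tendsto_of_tendsto_of_tendsto_of_le_of_le' hlow tendsto_const_nhds
    · filter_upwards [eventually_ge_atTop (max (Nseq f 0) 1)] with M hM
      have hM1 : 1 ≤ M := le_trans (le_max_right _ _) hM
      have hMpos : (0:ℝ) < M := by exact_mod_cast hM1
      have hbad := hGbad M (le_trans (le_max_left _ _) hM)
      have hc : (M : ℝ) - M / ((L M : ℝ) + 1) ≤ (pcnt G M : ℝ) := by
        have h := hsplit M
        have : (pcnt G M : ℝ) + (pcnt (fun m => ¬ G m) M : ℝ) = M := by exact_mod_cast h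
        linarith
      rw [le_div_iff₀ hMpos]
      calc (1 - 1 / ((L M : ℝ) + 1)) * M = (M : ℝ) - M / ((L M : ℝ) + 1) * 1 := by ring
        _ = (M : ℝ) - M / ((L M : ℝ) + 1) := by ring
        _ ≤ (pcnt G M : ℝ) := hc
    · filter_upwards [eventually_ge_atTop 1] with M hM
      have hMpos : (0:ℝ) < M := by exact_mod_cast hM
      rw [div_le_one hMpos]
      exact_mod_cast pcnt_le G M
  -- G is infinite
  have hGinf : (setOf G).Infinite := by
    intro hfin
    obtain ⟨m0, hm0⟩ := hfin.bddAbove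
    have h0 : Tendsto (fun M : ℕ => (pcnt G M : ℝ) / M) atTop (nhds 0) := by
      apply tendsto_of_tendsto_of_tendsto_of_le_of_le'
        (tendsto_const_nhds (x := (0:ℝ))) (tendsto_const_div_atTop_nhds_zero_nat (m0 : ℝ))
      · filter_upwards with M
        positivity
      · filter_upwards [eventually_ge_atTop 1] with M hM
        have hMpos : (0:ℝ) < M := by exact_mod_cast hM
        have hble : pcnt G M ≤ m0 := by
          unfold pcnt
          have hsub : (Finset.Icc 1 M).filter G ⊆ Finset.Icc 1 m0 := by
            intro m hm
            simp only [Finset.mem_filter, Finset.mem_Icc] at hm ⊢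
            exact ⟨hm.1.1, hm0 hm.2⟩
          have := Finset.card_le_card hsub
          rw [Nat.card_Icc, Nat.add_sub_cancel] at this
          convert this using 2
          congr!
        have : (pcnt G M : ℝ) ≤ m0 := by exact_mod_cast hble
        gcongr
    exact one_ne_zero (tendsto_nhds_unique hGdens h0)
  -- the subsequence
  set j : ℕ → ℕ := Nat.nth G with hjdef
  have hsm : StrictMono j := Nat.nth_strictMono hGinf
  have hmem : ∀ k, G (j k) := fun k => Nat.nth_mem_of_infinite hGinf k
  have h1 : ∀ k, 1 ≤ j k := fun k => (hmem k).1
  have hjtop : Tendsto j atTop atTop :=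
    tendsto_atTop_mono (fun k => hsm.le_apply) tendsto_id
  have hbto : Tendsto (fun k : ℕ => |a (j k)| * (j k : ℝ) ^ s) atTop (nhds 0) := by
    apply tendsto_of_tendsto_of_tendsto_of_le_of_le'
      (tendsto_const_nhds (x := (0:ℝ))) (hinvL.comp hjtop)
    · filter_upwards with k
      positivity
    · filter_upwards with k
      exact (hmem k).2
  -- link Nat.count with pcnt
  have hcount : ∀ n : ℕ, 1 ≤ n → Nat.count G n = pcnt G (n-1) := by
    intro n hn
    rw [Nat.count_eq_card_filter_range]
    unfold pcnt
    congr 1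
    ext m
    simp only [Finset.mem_filter, Finset.mem_range, Finset.mem_Icc]
    constructor
    · rintro ⟨hmn, hG⟩
      exact ⟨⟨hG.1, by omega⟩, hG⟩
    · rintro ⟨⟨hm1, hmn⟩, hG⟩
      exact ⟨by omega, hG⟩
  have hA1 : Tendsto (fun n : ℕ => (pcnt G (n-1) : ℝ) / ((n-1 : ℕ) : ℝ)) atTop (nhds 1) :=
    hGdens.comp (tendsto_sub_atTop_nat 1)
  have hB : Tendsto (fun n : ℕ => ((n-1 : ℕ) : ℝ) / n) atTop (nhds 1) := by
    have hinv : Tendsto (fun n : ℕ => (n:ℝ)⁻¹) atTop (nhds 0) :=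
      tendsto_inv_atTop_zero.comp tendsto_natCast_atTop_atTop
    have h := (tendsto_const_nhds (x := (1:ℝ)) (f := atTop (α := ℕ))).sub hinv
    rw [sub_zero] at h
    apply h.congr'
    filter_upwards [eventually_ge_atTop 1] with n hn
    have hpos : (0:ℝ) < n := by exact_mod_cast hn
    rw [Nat.cast_sub hn, Nat.cast_one]
    field_simp
  have hcd : Tendsto (fun n : ℕ => (Nat.count G n : ℝ) / n) atTop (nhds 1) := by
    have h := hA1.mul hB
    rw [one_mul] at h
    apply h.congr'
    filter_upwards [eventually_ge_atTop 2] with n hn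
    have hn1 : (1:ℕ) ≤ n - 1 := by omega
    have hne : ((n-1 : ℕ) : ℝ) ≠ 0 := by
      have : (0:ℕ) < n - 1 := hn1
      positivity
    have hnne : (n:ℝ) ≠ 0 := by
      have : (0:ℕ) < n := by omega
      positivity
    rw [hcount n (by omega)]
    have hn' : (1:ℕ) ≤ n := by omega
    rw [Nat.cast_sub hn', Nat.cast_one]
    have h3 : (n:ℝ) - 1 ≠ 0 := by
      have : (2:ℝ) ≤ n := by exact_mod_cast hn
      linarith
    field_simp
  have hkj : Tendsto (fun k : ℕ => (k : ℝ) / (j k)) atTop (nhds 1) := by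
    have h := hcd.comp hjtop
    apply h.congr
    intro k
    simp only [Function.comp_apply]
    rw [Nat.count_nth_of_infinite hGinf]
  have hrat : Tendsto (fun k : ℕ => (j k : ℝ) / k) atTop (nhds 1) := by
    have h := hkj.inv₀ one_ne_zero
    rw [inv_one] at h
    apply h.congr'
    filter_upwards [eventually_ge_atTop 1] with k hk
    rw [inv_div]
  exact ⟨j, hsm, h1, hbto, hrat⟩

/-- The density formulation of `a_j = o(j^{-s})` almost surely is equivalent to the
existence of a density-one subsequence along which `a_{j_k} = o(j_k^{-s})`. -/
theorem plasmon_stmt_1 (a : ℕ → ℝ) (s : ℝ) (hs : 0 ≤ s) :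
    Filter.Tendsto
        (fun δ : ℝ =>
          Filter.limsup
            (fun N : ℕ =>
              (((Finset.Icc 1 N).filter
                  (fun j : ℕ => δ * (j : ℝ) ^ (-s) < |a j|)).card : ℝ) / N)
            Filter.atTop)
        (nhdsWithin 0 (Set.Ioi 0)) (nhds 0)
      ↔
    ∃ j : ℕ → ℕ, StrictMono j ∧ (∀ k, 1 ≤ j k) ∧
      Filter.Tendsto (fun k : ℕ => |a (j k)| * (j k : ℝ) ^ s) Filter.atTop (nhds 0) ∧
      Filter.Tendsto (fun k : ℕ => (j k : ℝ) / (k : ℝ)) Filter.atTop (nhds 1) := by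
  constructor
  · intro H
    exact sub_of_star a s ((star_iff_lhs a s).mp H)
  · rintro ⟨j, hsm, h1, hto, hr⟩
    exact (star_iff_lhs a s).mpr (star_of_sub a s hsm h1 hto hr)
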